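/- Range-conditioned local reflection coefficient R21: under the two-layer range-conditioning hypotheses, assume Ĵφ11 is invertible and D̂_B := Ĥ_z21 − Ĵ_z11·Ĵφ11⁻¹·Ĥφ21 is invertible, and set D_B := H_z21 − J_z11·Jφ11⁻¹·Hφ21. Then D_B is invertible and R21 := D_B⁻¹ · (J_z11·Jφ11⁻¹·Jφ21 − J_z21) satisfies R21 = β̄21 · R̂21 · β̄21, where R̂21 := D̂_B⁻¹ · (Ĵ_z11·Ĵφ11⁻¹·Ĵφ21 − Ĵ_z21). -/

import Mathlib

open Matrix

/-- Range-conditioned local reflection coefficient `R21 = β̄21 · R̂21 · β̄21`. -/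
theorem R21_factorization
    (aB11 bB11 aB21 bB21 : Matrix (Fin 2) (Fin 2) ℂ)
    (haB11 : aB11.IsDiag) (hbB11 : bB11.IsDiag) (haB21 : aB21.IsDiag) (hbB21 : bB21.IsDiag)
    (hab11 : aB11 * bB11 = 1) (hab21 : aB21 * bB21 = 1)
    (hatJz11 hatHz11 hatJz21 hatHz21 : Matrix (Fin 2) (Fin 2) ℂ)
    (hdJz11 : hatJz11.IsDiag) (hdHz11 : hatHz11.IsDiag)
    (hdJz21 : hatJz21.IsDiag) (hdHz21 : hatHz21.IsDiag)
    (hatJphi11 hatHphi11 hatJphi21 hatHphi21 : Matrix (Fin 2) (Fin 2) ℂ)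
    (Jz11 Hz11 Jz21 Hz21 Jphi11 Hphi11 Jphi21 Hphi21 : Matrix (Fin 2) (Fin 2) ℂ)
    (eJz11 : Jz11 = hatJz11 * bB11) (eHz11 : Hz11 = hatHz11 * aB11)
    (eJz21 : Jz21 = hatJz21 * bB21) (eHz21 : Hz21 = hatHz21 * aB21)
    (eJphi11 : Jphi11 = hatJphi11 * bB11) (eHphi11 : Hphi11 = hatHphi11 * aB11)
    (eJphi21 : Jphi21 = hatJphi21 * bB21) (eHphi21 : Hphi21 = hatHphi21 * aB21)
    (hJphi11U : IsUnit hatJphi11)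
    (hatDB DB R21 hatR21 : Matrix (Fin 2) (Fin 2) ℂ)
    (ehatDB : hatDB = hatHz21 - hatJz11 * hatJphi11⁻¹ * hatHphi21)
    (hDBU : IsUnit hatDB)
    (eDB : DB = Hz21 - Jz11 * Jphi11⁻¹ * Hphi21)
    (eR21 : R21 = DB⁻¹ * (Jz11 * Jphi11⁻¹ * Jphi21 - Jz21))
    (ehatR21 : hatR21 = hatDB⁻¹ * (hatJz11 * hatJphi11⁻¹ * hatJphi21 - hatJz21)) :
    IsUnit DB ∧ R21 = bB21 * hatR21 * bB21 := by
  have hba11 : bB11 * aB11 = 1 := mul_eq_one_comm.mp hab11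
  have hbinv11 : bB11⁻¹ = aB11 := Matrix.inv_eq_left_inv hab11
  have hainv21 : aB21⁻¹ = bB21 := Matrix.inv_eq_right_inv hab21
  have hJ : Jz11 * Jphi11⁻¹ = hatJz11 * hatJphi11⁻¹ := by
    rw [eJz11, eJphi11, Matrix.mul_inv_rev, hbinv11, Matrix.mul_assoc,
      ← Matrix.mul_assoc bB11, hba11, Matrix.one_mul]
  have hDB : DB = hatDB * aB21 := by
    rw [eDB, eHz21, eHphi21, ehatDB, ← Matrix.mul_assoc, hJ, Matrix.sub_mul,
      Matrix.mul_assoc]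
  have hDBu : IsUnit DB := by
    rw [hDB]; exact hDBU.mul ((Matrix.isUnit_iff_isUnit_det aB21).mpr (IsUnit.of_mul_eq_one _ (by rw [← Matrix.det_mul, hab21, Matrix.det_one])))
  refine ⟨hDBu, ?_⟩
  have hDBi : DB⁻¹ = bB21 * hatDB⁻¹ := by
    rw [hDB, Matrix.mul_inv_rev, hainv21]
  have hnum : Jz11 * Jphi11⁻¹ * Jphi21 - Jz21
      = (hatJz11 * hatJphi11⁻¹ * hatJphi21 - hatJz21) * bB21 := by
    rw [hJ, eJphi21, eJz21, Matrix.sub_mul]; simp only [Matrix.mul_assoc]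
  rw [eR21, hDBi, hnum, ehatR21]
  simp only [Matrix.mul_assoc]
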